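/- Let (M,𝔪_Ω) be a left (R,P_Ω)-module, and for each i in an index set I let A_i = (a_{i,ω})_{ω∈Ω} be a finitely supported family of elements of k. Define P_i := Σ_{ω∈Ω} a_{i,ω} P_ω, 𝔪̄_i := Σ_{ω∈Ω} a_{i,ω} 𝔪_ω, and λ_i := Σ_{ω∈Ω} a_{i,ω} λ_ω. Then (M,(𝔪̄_i)_{i∈I}) is a left (R,(P_i)_{i∈I})-module of pair weight (λ_I,λ_I): for all x ∈ R, m ∈ M and i,j ∈ I, P_i(x)𝔪̄_j(m) = 𝔪̄_i(x𝔪̄_j(m)) + 𝔪̄_j(P_i(x)m) + λ_j 𝔪̄_i(xm) + λ_i 𝔪̄_j(xm). -/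
import Mathlib


/-- Finitely supported linear combinations of the operators of a
left multiple Rota-Baxter module again form a left multiple Rota-Baxter module over
the correspondingly combined multiple Rota-Baxter algebra. -/
theorem linear_combination_multiple_rota_baxter_module
    (k : Type*) [CommRing k]
    (R : Type*) [Ring R] [Algebra k R]
    (Ω : Type*) [Nonempty Ω]
    (lam : Ω → k)
    (P : Ω → R →ₗ[k] R)
    (hP : ∀ (α β : Ω) (r₁ r₂ : R),
      P α r₁ * P β r₂ =
        P α (r₁ * P β r₂) + P β (P α r₁ * r₂)
          + lam β • P α (r₁ * r₂) + lam α • P β (r₁ * r₂))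
    (M : Type*) [AddCommGroup M] [Module k M] [Module R M] [IsScalarTower k R M]
    (mOp : Ω → M →ₗ[k] M)
    (hM : ∀ (α β : Ω) (x : R) (m : M),
      P α x • mOp β m =
        mOp α (x • mOp β m) + mOp β (P α x • m)
          + lam β • mOp α (x • m) + lam α • mOp β (x • m))
    (I : Type*)
    (a : I → Ω →₀ k)
    (Q : I → R →ₗ[k] R) (mbar : I → M →ₗ[k] M) (μ : I → k)
    (hQ : ∀ i : I, Q i = (a i).sum fun ω c => c • P ω)
    (hmbar : ∀ i : I, mbar i = (a i).sum fun ω c => c • mOp ω)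
    (hμ : ∀ i : I, μ i = (a i).sum fun ω c => c * lam ω) :
    ∀ (i j : I) (x : R) (m : M),
      Q i x • mbar j m =
        mbar i (x • mbar j m) + mbar j (Q i x • m)
          + μ j • mbar i (x • m) + μ i • mbar j (x • m) := by
  intro i j x m
  have hcomm : ∀ (c : k) (r : R) (n : M), r • c • n = c • r • n :=
    fun c r n => (smul_comm c r n).symm
  simp only [hQ, hmbar, hμ, Finsupp.sum, LinearMap.coe_sum, Finset.sum_apply,
    LinearMap.smul_apply, map_sum, LinearMap.map_smul, Finset.smul_sum, Finset.sum_smul,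
    smul_assoc, hcomm]
  rw [Finset.sum_comm (s := (a i).support) (t := (a j).support)]
  rw [Finset.sum_comm (s := (a i).support) (t := (a j).support)]
  rw [← Finset.sum_add_distrib, ← Finset.sum_add_distrib, ← Finset.sum_add_distrib]
  refine Finset.sum_congr rfl fun β _ => ?_
  rw [← Finset.sum_add_distrib, ← Finset.sum_add_distrib, ← Finset.sum_add_distrib]
  refine Finset.sum_congr rfl fun α _ => ?_
  rw [hM α β x m]
  module
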